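/- arXiv:1605.05838 — 3 statements merged into one kernel-verified Lean document; each statement's English description precedes it below -/
import Mathlib

section
/- If U is a Σ^0_2 upward closed set of finite binary strings, then there exists a computable sequence (V_s) of finite sets of strings, with upward closures 𝐕_s, such that (i) for each string σ, σ ∈ U if and only if there exists s_0 such that σ ∈ 𝐕_s for all s > s_0, and (ii) there are infinitely many s with 𝐕_s ⊆ U. -/
open scoped Classical
open MeasureTheory

namespace RandProb

/-- Cantor space: the space of infinite binary sequences. -/
abbrev Cantor := ℕ → Bool

/-! ### Oracle partial recursive functions, via codes -/

/-- Codes for partial recursive functions with access to an oracle `O : ℕ → ℕ`.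
These codes play the role of (oracle) Turing machines. -/
inductive CodeO : Type
  | zero : CodeO
  | succ : CodeO
  | left : CodeO
  | right : CodeO
  | oracle : CodeO
  | pair : CodeO → CodeO → CodeO
  | comp : CodeO → CodeO → CodeO
  | prec : CodeO → CodeO → CodeO
  | rfind' : CodeO → CodeO

/-- Evaluation of an oracle code with (total) oracle `O`. -/
def CodeO.eval (O : ℕ → ℕ) : CodeO → ℕ →. ℕ
  | .zero => pure 0
  | .succ => Nat.succ
  | .left => ↑fun n : ℕ => n.unpair.1
  | .right => ↑fun n : ℕ => n.unpair.2
  | .oracle => ↑fun n : ℕ => O n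
  | .pair cf cg => fun n => Nat.pair <$> cf.eval O n <*> cg.eval O n
  | .comp cf cg => fun n => cg.eval O n >>= cf.eval O
  | .prec cf cg =>
    Nat.unpaired fun a n =>
      n.rec (cf.eval O a) fun y IH => do
        let i ← IH
        cg.eval O (Nat.pair a (Nat.pair y i))
  | .rfind' cf =>
    Nat.unpaired fun a m =>
      (Nat.rfind fun n => (fun m => m = 0) <$> cf.eval O (Nat.pair a (n + m))).map (· + m)

/-- A canonical injective numbering of oracle codes. -/
def CodeO.encode : CodeO → ℕ
  | .zero => 0
  | .succ => 1
  | .left => 2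
  | .right => 3
  | .oracle => 4
  | .pair cf cg => 2 * (2 * Nat.pair cf.encode cg.encode) + 5
  | .comp cf cg => 2 * (2 * Nat.pair cf.encode cg.encode + 1) + 5
  | .prec cf cg => 2 * (2 * Nat.pair cf.encode cg.encode) + 6
  | .rfind' cf => 2 * (2 * cf.encode + 1) + 6

/-- The Turing jump of an oracle: the halting problem relative to `O`,
as a `{0,1}`-valued function. -/
noncomputable def jump (O : ℕ → ℕ) : ℕ → ℕ := fun e =>
  if ∃ c : CodeO, c.encode = e ∧ (c.eval O e).Dom then 1 else 0

/-- `iterJump n` is `∅^(n)`, the `n`-th iterate of the halting problem (as an oracle). -/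
noncomputable def iterJump : ℕ → ℕ → ℕ
  | 0 => fun _ => 0
  | n + 1 => jump (iterJump n)

/-- `S ⊆ ℕ` is computably enumerable relative to the oracle `O`. -/
def CeIn (O : ℕ → ℕ) (S : Set ℕ) : Prop := ∃ c : CodeO, S = {m | (c.eval O m).Dom}

/-- The left Dedekind cut of `α` (as a set of codes of rationals) is c.e. in `O`. -/
def LeftCeIn (O : ℕ → ℕ) (α : ℝ) : Prop :=
  CeIn O {m | ∃ q : ℚ, Encodable.encode q = m ∧ (q : ℝ) < α}

/-- The right Dedekind cut of `α` (as a set of codes of rationals) is c.e. in `O`. -/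
def RightCeIn (O : ℕ → ℕ) (α : ℝ) : Prop :=
  CeIn O {m | ∃ q : ℚ, Encodable.encode q = m ∧ α < (q : ℝ)}

/-! ### Martin-Löf randomness for real numbers -/

/-- The `i`-th component of a Martin-Löf test coded by the set `W ⊆ ℕ`:
the union of all open rational intervals whose codes are enumerated into the
`i`-th section of `W`. -/
def testSet (W : Set ℕ) (i : ℕ) : Set ℝ :=
  {x | ∃ p q : ℚ, Nat.pair i (Encodable.encode (p, q)) ∈ W ∧ (p : ℝ) < x ∧ x < (q : ℝ)}

/-- `α` is Martin-Löf random relative to the oracle `O`. -/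
def MLRandomIn (O : ℕ → ℕ) (α : ℝ) : Prop :=
  ∀ W : Set ℕ, CeIn O W →
    (∀ i, volume (testSet W i) ≤ ENNReal.ofReal ((2 : ℝ)⁻¹ ^ i)) →
    ∃ i, α ∉ testSet W i

/-- `α` is `n`-random: Martin-Löf random relative to `∅^(n-1)`. -/
def NRandom (n : ℕ) (α : ℝ) : Prop := MLRandomIn (iterJump (n - 1)) α

/-! ### The uniform measure on Cantor space -/

/-- The binary digits of a real number (meaningful on `[0,1)`). -/
noncomputable def digits (x : ℝ) : Cantor := fun n => decide (⌊x * 2 ^ (n + 1)⌋ % 2 = 1)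

/-- The uniform (Lebesgue) product measure on Cantor space, obtained as the
pushforward of Lebesgue measure on `[0,1)` under the binary-digit map. -/
noncomputable def mu : Measure Cantor :=
  Measure.map digits (volume.restrict (Set.Ico (0 : ℝ) 1))

/-- The uniform measure of a set of elements of Cantor space, as a real number. -/
noncomputable def muR (S : Set Cantor) : ℝ := (mu S).toReal

/-! ### Strings, prefixes and cylinders -/

/-- The length-`n` initial segment of `X ∈ 2^ω`, as a finite binary string. -/
def initSeg (X : Cantor) (n : ℕ) : List Bool := (List.range n).map X

/-- `⟦S⟧`: the elements of Cantor space having a prefix in the set of strings `S`. -/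
def cyl (S : Set (List Bool)) : Set Cantor := {X | ∃ n, initSeg X n ∈ S}

/-- A set of strings is prefix-free if none of its elements properly extends another. -/
def IsPrefixFree (S : Set (List Bool)) : Prop := ∀ σ ∈ S, ∀ τ ∈ S, σ <+: τ → σ = τ

/-- A set of strings is upward closed if it is closed under taking extensions. -/
def UpClosed (S : Set (List Bool)) : Prop := ∀ σ ∈ S, ∀ τ, σ <+: τ → τ ∈ S

/-- Two strings are compatible if one is a prefix of the other. -/
def Compatible (σ τ : List Bool) : Prop := σ <+: τ ∨ τ <+: σ

/-! ### Oracle machines -/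

/-- An element of Cantor space viewed as a `{0,1}`-valued oracle. -/
def oX (X : Cantor) : ℕ → ℕ := fun n => cond (X n) 1 0

/-- `evalO X c n`: the (possibly divergent) output of the oracle machine `c`
on input `n` with oracle `X`. -/
def evalO (X : Cantor) (c : CodeO) (n : ℕ) : Part ℕ := c.eval (oX X) n

/-- The oracle obtained by writing the string `ρ` before the bits of `X`. -/
def prepend (ρ : List Bool) (X : Cantor) : Cantor := fun n =>
  if n < ρ.length then ρ.getD n false else X (n - ρ.length)

/-- `X ∈ 2^ω` extends the finite string `ρ`. -/
def Extends (X : Cantor) (ρ : List Bool) : Prop := initSeg X ρ.length = ρ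

/-- `u` is a universal oracle machine: some effective, prefix-free translation
`c ↦ σ_c` satisfies `u(σ_c * X, n) ≃ c(X, n)` for all machines `c`. -/
def UniversalOM (u : CodeO) : Prop :=
  ∃ σ : CodeO → List Bool,
    (∃ f : ℕ → ℕ, Computable f ∧ ∀ c : CodeO, f c.encode = Encodable.encode (σ c)) ∧
    IsPrefixFree (Set.range σ) ∧
    ∀ (c : CodeO) (X : Cantor) (n : ℕ), evalO (prepend (σ c) X) u n = evalO X c n

/-- `TOT(c)`: the oracles `X` such that the function `c(X)` is total. -/
def TOT (c : CodeO) : Set Cantor := {X | ∀ n, (evalO X c n).Dom}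

/-- The domain of the partial function `c(X)`. -/
def domSet (c : CodeO) (X : Cantor) : Set ℕ := {n | (evalO X c n).Dom}

/-- The range of the partial function `c(X)`. -/
def ranSet (c : CodeO) (X : Cantor) : Set ℕ := {v | ∃ n, v ∈ evalO X c n}

/-- `INF(c)`: the oracles `X` such that `c(X)` has infinite domain. -/
def INF (c : CodeO) : Set Cantor := {X | (domSet c X).Infinite}

/-- `COF(c)`: the oracles `X` such that `c(X)` has cofinite domain. -/
def COF (c : CodeO) : Set Cantor := {X | (domSet c X)ᶜ.Finite}

/-- `COM(c)`: the oracles `X` such that `c(X)` has computable domain. -/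
def COM (c : CodeO) : Set Cantor := {X | ComputablePred fun n => n ∈ domSet c X}

/-- The characteristic function of a set of naturals. -/
noncomputable def chi (A : Set ℕ) : ℕ → ℕ := fun n => if n ∈ A then 1 else 0

/-- Turing reducibility between sets of naturals. -/
def TuringLEs (B A : Set ℕ) : Prop := ∃ c : CodeO, ∀ n, c.eval (chi A) n = Part.some (chi B n)

/-- The halting problem `∅'` as a set of naturals. -/
noncomputable def HaltingSet : Set ℕ := {e | iterJump 1 e = 1}

/-- `COMPL(c)`: the oracles `X` such that the domain of `c(X)` computes the halting problem. -/
noncomputable def COMPL (c : CodeO) : Set Cantor := {X | TuringLEs HaltingSet (domSet c X)}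

/-- Turing reducibility between total functions on ℕ. -/
def TuringLEf (f g : ℕ → ℕ) : Prop := ∃ c : CodeO, ∀ n, c.eval g n = Part.some (f n)

/-- A real number viewed as an oracle, via its binary expansion. -/
noncomputable def realOracle (α : ℝ) : ℕ → ℕ := oX (digits α)

/-- Two reals have Turing-incomparable degrees. -/
noncomputable def TIncompReal (α β : ℝ) : Prop :=
  ¬ TuringLEf (realOracle α) (realOracle β) ∧ ¬ TuringLEf (realOracle β) (realOracle α)

/-! ### Arithmetical hierarchy -/

/-- Evaluation with the trivial (empty) oracle: ordinary partial recursion. -/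
def eval0 (c : CodeO) : ℕ →. ℕ := c.eval fun _ => 0

/-- `SigmaNumIdx n c` is the `Σ^0_{n+1}` subset of `ℕ` with index `c`. -/
def SigmaNumIdx : ℕ → CodeO → Set ℕ
  | 0, c => {m | (eval0 c m).Dom}
  | n + 1, c => {m | ∃ k, Nat.pair m k ∉ SigmaNumIdx n c}

/-- `S ⊆ ℕ` is `Σ^0_n` (intended for `n ≥ 1`). -/
def SigmaN (n : ℕ) (S : Set ℕ) : Prop := ∃ c : CodeO, S = SigmaNumIdx (n - 1) c

/-- The set of codes of the elements of a set of binary strings. -/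
def strCodes (S : Set (List Bool)) : Set ℕ := {m | ∃ σ ∈ S, Encodable.encode σ = m}

/-- A set of binary strings is `Σ^0_n`. -/
def SigmaStr (n : ℕ) (S : Set (List Bool)) : Prop := SigmaN n (strCodes S)

/-- A set of binary strings is `Π^0_n`: its complement is `Σ^0_n`. -/
def PiStr (n : ℕ) (S : Set (List Bool)) : Prop := SigmaStr n Sᶜ

/-- A set of binary strings is c.e. relative to the oracle `O`. -/
def CeStrIn (O : ℕ → ℕ) (S : Set (List Bool)) : Prop := CeIn O (strCodes S)

/-- `SigmaClassIdx n c m` is the `Σ^0_{n+1}` class of elements of Cantor space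
with index `c` and parameter `m`. -/
def SigmaClassIdx : ℕ → CodeO → ℕ → Set Cantor
  | 0, c, m => {X | (evalO X c m).Dom}
  | n + 1, c, m => {X | ∃ k, X ∉ SigmaClassIdx n c (Nat.pair m k)}

/-! ### Monotone machines -/

/-- A monotone machine: a partial computable, monotone map on finite binary strings. -/
structure MonoMachine where
  f : List Bool →. List Bool
  partrec : Partrec f
  mono : ∀ ⦃σ τ a b : List Bool⦄, σ <+: τ → a ∈ f σ → b ∈ f τ → a <+: b

/-- The oracles `X` such that the output of the monotone machine on `X` is infinite. -/
def MonoINF (M : MonoMachine) : Set Cantor :=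
  {X | ∀ k, ∃ n a, a ∈ M.f (initSeg X n) ∧ k ≤ a.length}

/-- The `k`-th bit of the output `M(X)` of a monotone machine is `b`. -/
def MonoMachine.hasBit (M : MonoMachine) (X : Cantor) (k : ℕ) (b : Bool) : Prop :=
  ∃ n a, a ∈ M.f (initSeg X n) ∧ a[k]? = some b

/-- `U` is a universal monotone machine. -/
def UniversalMono (U : MonoMachine) : Prop :=
  ∃ (M : ℕ → MonoMachine) (σ : ℕ → List Bool),
    Partrec₂ (fun (e : ℕ) (τ : List Bool) => (M e).f τ) ∧
    (∀ V : MonoMachine, ∃ e, (M e).f = V.f) ∧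
    Computable σ ∧ IsPrefixFree (Set.range σ) ∧
    ∀ e τ, U.f (σ e ++ τ) = (M e).f τ

/-! ### Infinitary self-delimiting machines -/

/-- Chaitin's infinitary self-delimiting machines: `f σ n` is the `n`-th approximation
of the output on program `σ` (`none` meaning divergence); the convergence relation is
decidable, approximations are monotone, and machines are self-delimiting. -/
structure InfMachine where
  f : List Bool → ℕ → Option (List Bool)
  computable : Computable₂ f
  mono : ∀ σ m n a, n < m → f σ m = some a → ∃ b, f σ n = some b ∧ b <+: a
  sd : ∀ σ τ n a, f σ n = some a → f (σ ++ τ) n = some a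

/-- `M^∞(σ)↓`: all approximations converge. -/
def InfMachine.domInf (M : InfMachine) (σ : List Bool) : Prop := ∀ n, M.f σ n ≠ none

/-- The domain of `M^∞`. -/
def InfMachine.DOM (M : InfMachine) : Set (List Bool) := {σ | M.domInf σ}

/-- The output `M^∞(σ)` is infinite (a stream). -/
def InfMachine.outInf (M : InfMachine) (σ : List Bool) : Prop :=
  ∀ k, ∃ n a, M.f σ n = some a ∧ k ≤ a.length

/-- `FIN(M^∞)`: programs in the domain with finite output. -/
def InfMachine.FIN (M : InfMachine) : Set (List Bool) := {σ | M.domInf σ ∧ ¬ M.outInf σ}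

/-- `INF(M^∞)`: programs in the domain with infinite output. -/
def InfMachine.INF (M : InfMachine) : Set (List Bool) := {σ | M.domInf σ ∧ M.outInf σ}

/-- The `k`-th bit of the output `M^∞(σ)` is `b`. -/
def InfMachine.hasBit (M : InfMachine) (σ : List Bool) (k : ℕ) (b : Bool) : Prop :=
  ∃ n a, M.f σ n = some a ∧ a[k]? = some b

/-- The domain of the prefix-free machine `M^*`: minimal strings in the domain of `M^∞`. -/
def InfMachine.DOMstar (M : InfMachine) : Set (List Bool) :=
  {σ | M.domInf σ ∧ ∀ τ, τ <+: σ → τ ≠ σ → ¬ M.domInf τ}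

/-- Programs whose output is a stream with a tail of 1s. -/
def InfMachine.COFout (M : InfMachine) : Set (List Bool) :=
  {σ | M.domInf σ ∧ M.outInf σ ∧ ∃ t, ∀ k, t ≤ k → M.hasBit σ k true}

/-- `A^∞(σ) ≃ B^∞(τ)`: both converge or both diverge, with equal outputs. -/
def InfAgree (A : InfMachine) (σ : List Bool) (B : InfMachine) (τ : List Bool) : Prop :=
  (A.domInf σ ↔ B.domInf τ) ∧ (A.domInf σ → ∀ k b, (A.hasBit σ k b ↔ B.hasBit τ k b))

/-- `U` is a universal infinitary self-delimiting machine. -/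
def UniversalInf (U : InfMachine) : Prop :=
  ∃ (M : ℕ → InfMachine) (σ : ℕ → List Bool),
    Computable (fun p : ℕ × List Bool × ℕ => (M p.1).f p.2.1 p.2.2) ∧
    (∀ V : InfMachine, ∃ e, ∀ τ, InfAgree (M e) τ V τ) ∧
    Computable σ ∧ IsPrefixFree (Set.range σ) ∧
    ∀ e τ, InfAgree U (σ e ++ τ) (M e) τ

end RandProb

namespace RandProb

/-- The upward closure of a finite list of strings. -/
def upClosure (V : List (List Bool)) : Set (List Bool) := {τ | ∃ σ ∈ V, σ <+: τ}

namespace Canon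

open Nat.Partrec (Code)
open Nat.Partrec.Code

/-- Translate an oracle code with trivial oracle to an ordinary code. -/
def toC : CodeO → Code
  | .zero => .zero
  | .succ => .succ
  | .left => .left
  | .right => .right
  | .oracle => .zero
  | .pair a b => .pair (toC a) (toC b)
  | .comp a b => .comp (toC a) (toC b)
  | .prec a b => .prec (toC a) (toC b)
  | .rfind' a => .rfind' (toC a)

theorem eval_toC (c : CodeO) : (toC c).eval = c.eval (fun _ => 0) := by
  induction c with
  | zero => rfl
  | succ => rfl
  | left => rfl
  | right => rfl
  | oracle => rfl
  | pair a b iha ihb => simp only [toC, eval, CodeO.eval, iha, ihb]; rfl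
  | comp a b iha ihb => simp only [toC, eval, CodeO.eval, iha, ihb]; rfl
  | prec a b iha ihb => simp only [toC, eval, CodeO.eval, iha, ihb]; rfl
  | rfind' a iha => simp only [toC, eval, CodeO.eval, iha]; rfl

variable (cc : Code)

/-- `n` newly halts at step `t+1`. -/
def nh (t n : ℕ) : Bool := (evaln (t + 1) cc n).isSome && !(evaln t cc n).isSome

/-- Block of new enumerations at stage `t`, padded with the dummy `2*t`. -/
def blk (t : ℕ) : List ℕ :=
  (((List.range (t + 1)).filter (fun n => nh cc t n)).map fun n => 2 * n + 1) ++ [2 * t]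

def J (s : ℕ) : List ℕ := (List.range (s + 1)).flatMap (blk cc)

/-- The injective enumeration. -/
def F (s : ℕ) : ℕ := (J cc s).getD s 0

variable {cc}

theorem nh_lt {t n : ℕ} (h : nh cc t n = true) : n < t + 1 := by
  have h1 : (evaln (t + 1) cc n).isSome := by
    have := h; unfold nh at this; exact (Bool.and_eq_true .. ▸ this).1
  obtain ⟨x, hx⟩ := Option.isSome_iff_exists.mp h1
  exact evaln_bound (show x ∈ evaln (t + 1) cc n from hx)

theorem nh_not_lt {t t' n : ℕ} (h : t < t') (h1 : nh cc t n = true)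
    (h2 : nh cc t' n = true) : False := by
  unfold nh at h1 h2
  have e1 : (evaln (t + 1) cc n).isSome := (Bool.and_eq_true .. ▸ h1).1
  have e2 : !(evaln t' cc n).isSome := (Bool.and_eq_true .. ▸ h2).2
  obtain ⟨x, hx⟩ := Option.isSome_iff_exists.mp e1
  have : x ∈ evaln t' cc n :=
    evaln_mono (by omega) (show x ∈ evaln (t + 1) cc n from hx)
  rw [show evaln t' cc n = some x from this] at e2
  simp at e2

theorem nh_unique {t t' n : ℕ} (h1 : nh cc t n = true) (h2 : nh cc t' n = true) : t = t' := by
  rcases Nat.lt_trichotomy t t' with h | h | h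
  · exact absurd (nh_not_lt h h1 h2) (fun x => x)
  · exact h
  · exact absurd (nh_not_lt h h2 h1) (fun x => x)

theorem dom_iff {n : ℕ} : (cc.eval n).Dom ↔ ∃ t, (evaln t cc n).isSome := by
  rw [Part.dom_iff_mem]
  constructor
  · rintro ⟨x, hx⟩
    obtain ⟨t, ht⟩ := evaln_complete.mp hx
    exact ⟨t, Option.isSome_iff_exists.mpr ⟨x, ht⟩⟩
  · rintro ⟨t, ht⟩
    obtain ⟨x, hx⟩ := Option.isSome_iff_exists.mp ht
    exact ⟨x, evaln_sound (show x ∈ evaln t cc n from hx)⟩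

theorem exists_nh {n : ℕ} (h : (cc.eval n).Dom) : ∃ t, nh cc t n = true := by
  classical
  have hex : ∃ t, (evaln t cc n).isSome := dom_iff.mp h
  have hspec := Nat.find_spec hex
  have hpos : Nat.find hex ≠ 0 := by
    intro h0
    rw [h0] at hspec
    simp [evaln] at hspec
  obtain ⟨m, hm⟩ := Nat.exists_eq_succ_of_ne_zero hpos
  refine ⟨m, ?_⟩
  have h1 : (evaln (m + 1) cc n).isSome := by
    rw [show m + 1 = Nat.find hex from by omega]; exact hspec
  have h2 : ¬(evaln m cc n).isSome := Nat.find_min hex (by omega)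
  unfold nh
  simp [h1, h2]

theorem dom_of_nh {t n : ℕ} (h : nh cc t n = true) : (cc.eval n).Dom := by
  unfold nh at h
  exact dom_iff.mpr ⟨t + 1, (Bool.and_eq_true .. ▸ h).1⟩

theorem mem_blk {t a : ℕ} :
    a ∈ blk cc t ↔ (∃ n, nh cc t n = true ∧ a = 2 * n + 1) ∨ a = 2 * t := by
  simp only [blk, List.mem_append, List.mem_map, List.mem_filter, List.mem_range,
    List.mem_singleton]
  constructor
  · rintro (⟨n, ⟨_, hn⟩, rfl⟩ | rfl)
    · exact Or.inl ⟨n, hn, rfl⟩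
    · exact Or.inr rfl
  · rintro (⟨n, hn, rfl⟩ | rfl)
    · exact Or.inl ⟨n, ⟨nh_lt hn, hn⟩, rfl⟩
    · exact Or.inr rfl

theorem mem_J {a u : ℕ} : a ∈ J cc u ↔ ∃ t, t ≤ u ∧ a ∈ blk cc t := by
  simp [J, List.mem_flatMap, List.mem_range, Nat.lt_succ_iff]

theorem blk_mem_unique {t t' a : ℕ} (h : a ∈ blk cc t) (h' : a ∈ blk cc t') : t = t' := by
  rcases mem_blk.mp h with ⟨n, hn, rfl⟩ | rfl <;>
    rcases mem_blk.mp h' with ⟨n', hn', he⟩ | he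
  · have : n = n' := by omega
    exact nh_unique hn (this ▸ hn')
  · omega
  · omega
  · omega

theorem blk_nodup (t : ℕ) : (blk cc t).Nodup := by
  rw [blk, List.nodup_append]
  refine ⟨?_, List.nodup_singleton _, ?_⟩
  · refine List.Nodup.map (fun a b h => by omega) ?_
    exact List.nodup_range.filter _
  · intro a ha b hb
    simp only [List.mem_map, List.mem_singleton] at ha hb
    obtain ⟨n, _, rfl⟩ := ha
    omega

theorem J_succ (s : ℕ) : J cc (s + 1) = J cc s ++ blk cc (s + 1) := by
  simp [J, List.range_succ]

theorem J_nodup (u : ℕ) : (J cc u).Nodup := by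
  induction u with
  | zero =>
    have : J cc 0 = blk cc 0 := by
      have hr : List.range 1 = [0] := rfl
      simp [J, hr]
    rw [this]; exact blk_nodup 0
  | succ u ih =>
    rw [J_succ, List.nodup_append]
    refine ⟨ih, blk_nodup _, ?_⟩
    intro a ha b hb hab
    subst hab
    obtain ⟨t, ht, hat⟩ := mem_J.mp ha
    have : t = u + 1 := blk_mem_unique hat hb
    omega

theorem J_len (s : ℕ) : s < (J cc s).length := by
  induction s with
  | zero =>
    have : J cc 0 = blk cc 0 := by
      have hr : List.range 1 = [0] := rfl
      simp [J, hr]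
    rw [this, blk]
    simp
  | succ s ih =>
    rw [J_succ, List.length_append, blk]
    simp only [List.length_append, List.length_singleton]
    omega

theorem J_prefix {s u : ℕ} (h : s ≤ u) : J cc s <+: J cc u := by
  induction u with
  | zero =>
    have : s = 0 := by omega
    subst this; exact List.prefix_refl _
  | succ u ih =>
    rcases Nat.lt_succ_iff_lt_or_eq.mp (Nat.lt_succ_of_le h) with h' | h'
    · exact (ih (by omega)).trans (J_succ u ▸ List.prefix_append _ _)
    · subst h'; exact List.prefix_refl _

theorem getD_J {s u : ℕ} (h : s < (J cc u).length) : (J cc u).getD s 0 = F cc s := by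
  rcases le_total s u with hsu | hus
  · have hpre : J cc s <+: J cc u := J_prefix hsu
    have hs : s < (J cc s).length := J_len s
    rw [List.getD_eq_getElem _ _ h, F, List.getD_eq_getElem _ _ hs]
    exact (hpre.getElem hs).symm
  · have hpre : J cc u <+: J cc s := J_prefix hus
    have hs : s < (J cc s).length := lt_of_lt_of_le h hpre.length_le
    rw [List.getD_eq_getElem _ _ h, F, List.getD_eq_getElem _ _ hs]
    exact hpre.getElem h

theorem F_mem (s : ℕ) : F cc s ∈ J cc s := by
  rw [F, List.getD_eq_getElem _ _ (J_len s)]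
  exact List.getElem_mem _

theorem exists_F_of_mem {a u : ℕ} (h : a ∈ J cc u) : ∃ s, F cc s = a := by
  obtain ⟨i, hi, hia⟩ := List.mem_iff_getElem.mp h
  exact ⟨i, by rw [← getD_J hi, List.getD_eq_getElem _ _ hi]; exact hia⟩

theorem F_lt_ne {s s' : ℕ} (h : s < s') : F cc s ≠ F cc s' := by
  have h2 : s' < (J cc s').length := J_len s'
  have h1 : s < (J cc s').length := h.trans h2
  intro hEq
  have e1 : (J cc s')[s] = F cc s := by rw [← getD_J h1, List.getD_eq_getElem _ _ h1]
  have e2 : (J cc s')[s'] = F cc s' := by rw [← getD_J h2, List.getD_eq_getElem _ _ h2]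
  have : s = s' := (J_nodup s').getElem_inj_iff.mp (by rw [e1, e2, hEq])
  omega

theorem F_inj : Function.Injective (F cc) := by
  intro s s' hEq
  rcases Nat.lt_trichotomy s s' with h | h | h
  · exact absurd hEq (F_lt_ne h)
  · exact h
  · exact absurd hEq.symm (F_lt_ne h)

theorem F_eq_odd_iff {n : ℕ} : (∃ s, F cc s = 2 * n + 1) ↔ (cc.eval n).Dom := by
  constructor
  · rintro ⟨s, hs⟩
    have hmem : (2 * n + 1 : ℕ) ∈ J cc s := hs ▸ F_mem s
    obtain ⟨t, _, ht⟩ := mem_J.mp hmem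
    rcases mem_blk.mp ht with ⟨n', hn', he⟩ | he
    · have : n' = n := by omega
      exact dom_of_nh (this ▸ hn')
    · omega
  · intro h
    obtain ⟨t, ht⟩ := exists_nh h
    have hmem : (2 * n + 1 : ℕ) ∈ J cc t :=
      mem_J.mpr ⟨t, le_refl t, mem_blk.mpr (Or.inl ⟨n, ht, rfl⟩)⟩
    exact exists_F_of_mem hmem

/-- Non-deficiency stages. -/
def GoodS : Set ℕ := {s | ∀ t, s < t → F cc s < F cc t}

variable (cc)

theorem good_unbounded (N : ℕ) : ∃ s, N < s ∧ s ∈ GoodS (cc := cc) := by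
  classical
  have hA : ∃ v, ∃ t, N < t ∧ F cc t = v := ⟨F cc (N + 1), N + 1, by omega, rfl⟩
  obtain ⟨t, htN, htv⟩ := Nat.find_spec hA
  refine ⟨t, htN, fun u hu => ?_⟩
  have huN : N < u := htN.trans hu
  have hge : Nat.find hA ≤ F cc u := by
    by_contra hlt
    push_neg at hlt
    exact Nat.find_min hA hlt ⟨u, huN, rfl⟩
  have hne : F cc t ≠ F cc u := F_lt_ne hu
  omega

theorem good_infinite : (GoodS (cc := cc)).Infinite := by
  apply Set.infinite_of_not_bddAbove
  rintro ⟨N, hN⟩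
  obtain ⟨s, hNs, hs⟩ := good_unbounded cc N
  exact absurd (hN hs) (by omega)

/-- The approximation condition. -/
def okB (s m : ℕ) : Bool :=
  (List.range (F cc s)).any fun k =>
    decide (2 * Nat.pair m k + 1 < F cc s) &&
      (List.range (s + 1)).all fun t => decide (F cc t ≠ 2 * Nat.pair m k + 1)

/-- The approximating sequence of finite sets of strings. -/
def VL (s : ℕ) : List (List Bool) :=
  ((List.range (F cc s)).filter (fun m => okB cc s m)).filterMap
    (fun m => Encodable.decode₂ (List Bool) m)

variable {cc}

theorem okB_iff {s m : ℕ} :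
    okB cc s m = true ↔
      ∃ k, 2 * Nat.pair m k + 1 < F cc s ∧
        ∀ t, t ≤ s → F cc t ≠ 2 * Nat.pair m k + 1 := by
  simp only [okB, List.any_eq_true, List.all_eq_true, List.mem_range, Bool.and_eq_true,
    decide_eq_true_eq, Nat.lt_succ_iff]
  constructor
  · rintro ⟨k, _, h1, h2⟩
    exact ⟨k, h1, h2⟩
  · rintro ⟨k, h1, h2⟩
    exact ⟨k, lt_of_le_of_lt (Nat.right_le_pair m k) (by omega), h1, h2⟩

theorem mem_VL {σ : List Bool} {s : ℕ} :
    σ ∈ VL cc s ↔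
      Encodable.encode σ < F cc s ∧ okB cc s (Encodable.encode σ) = true := by
  simp only [VL, List.mem_filterMap, List.mem_filter, List.mem_range,
    Encodable.decode₂_eq_some]
  constructor
  · rintro ⟨m, ⟨hm, hok⟩, rfl⟩
    exact ⟨hm, hok⟩
  · rintro ⟨hm, hok⟩
    exact ⟨Encodable.encode σ, ⟨hm, hok⟩, rfl⟩

section PrimrecHelpers

open Primrec

theorem primrec_filter {α β : Type} [Primcodable α] [Primcodable β]
    {f : α → List β} {p : α → β → Bool} (hf : Primrec f) (hp : Primrec₂ p) :
    Primrec fun a => (f a).filter (p a) := by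
  have hh : Primrec₂ (fun a (x : β × List β) => cond (p a x.1) (x.1 :: x.2) x.2) :=
    Primrec.cond (hp.comp fst (fst.comp snd))
      (list_cons.comp (fst.comp snd) (snd.comp snd)) (snd.comp snd)
  refine (list_foldr hf (const ([] : List β)) hh).of_eq fun a => ?_
  induction f a with
  | nil => rfl
  | cons b l ih =>
    simp only [List.foldr_cons, ih, List.filter_cons]
    cases hb : p a b <;> simp

theorem primrec_any {α β : Type} [Primcodable α] [Primcodable β]
    {f : α → List β} {p : α → β → Bool} (hf : Primrec f) (hp : Primrec₂ p) :
    Primrec fun a => (f a).any (p a) := by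
  have hh : Primrec₂ (fun a (x : β × Bool) => p a x.1 || x.2) :=
    Primrec.or.comp (hp.comp fst (fst.comp snd)) (snd.comp snd)
  refine (list_foldr hf (const false) hh).of_eq fun a => ?_
  induction f a with
  | nil => rfl
  | cons b l ih => simp [List.any_cons, ih]

theorem primrec_all {α β : Type} [Primcodable α] [Primcodable β]
    {f : α → List β} {p : α → β → Bool} (hf : Primrec f) (hp : Primrec₂ p) :
    Primrec fun a => (f a).all (p a) := by
  have hh : Primrec₂ (fun a (x : β × Bool) => p a x.1 && x.2) :=
    Primrec.and.comp (hp.comp fst (fst.comp snd)) (snd.comp snd)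
  refine (list_foldr hf (const true) hh).of_eq fun a => ?_
  induction f a with
  | nil => rfl
  | cons b l ih => simp [List.all_cons, ih]

end PrimrecHelpers

theorem primrec_evaln : Primrec₂ fun t n => evaln t cc n :=
  Nat.Partrec.Code.primrec_evaln.comp ((Primrec.fst.pair (Primrec.const cc)).pair Primrec.snd)

theorem primrec_nh : Primrec₂ (nh cc) := by
  have h1 : Primrec fun p : ℕ × ℕ => (evaln (p.1 + 1) cc p.2).isSome :=
    Primrec.option_isSome.comp
      ((primrec_evaln (cc := cc)).comp (Primrec.succ.comp Primrec.fst) Primrec.snd)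
  have h2 : Primrec fun p : ℕ × ℕ => !(evaln p.1 cc p.2).isSome :=
    Primrec.not.comp (Primrec.option_isSome.comp
      ((primrec_evaln (cc := cc)).comp Primrec.fst Primrec.snd))
  exact Primrec.and.comp h1 h2

theorem primrec_blk : Primrec (blk cc) := by
  have hfil : Primrec fun t => (List.range (t + 1)).filter (fun n => nh cc t n) :=
    primrec_filter (Primrec.list_range.comp Primrec.succ) primrec_nh
  have hmap : Primrec fun t => (((List.range (t + 1)).filter (fun n => nh cc t n)).map
      fun n => 2 * n + 1) :=
    Primrec.list_map hfil
      ((Primrec.succ.comp (Primrec.nat_mul.comp (Primrec.const 2) Primrec.snd)).to₂)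
  exact Primrec.list_append.comp hmap
    (Primrec.list_cons.comp (Primrec.nat_mul.comp (Primrec.const 2) Primrec.id)
      (Primrec.const []))

theorem primrec_J : Primrec (J cc) :=
  Primrec.list_flatMap (Primrec.list_range.comp Primrec.succ)
    ((primrec_blk (cc := cc)).comp Primrec.snd).to₂

theorem primrec_F : Primrec (F cc) :=
  (Primrec.list_getD 0).comp (primrec_J (cc := cc)) Primrec.id

theorem primrec_okB : Primrec₂ (okB cc) := by
  have hF : Primrec (F cc) := primrec_F
  have hpair : Primrec fun x : (ℕ × ℕ) × ℕ => 2 * Nat.pair x.1.2 x.2 + 1 :=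
    Primrec.succ.comp (Primrec.nat_mul.comp (Primrec.const 2)
      (Primrec₂.natPair.comp (Primrec.snd.comp Primrec.fst) Primrec.snd))
  have hFs : Primrec fun x : (ℕ × ℕ) × ℕ => F cc x.1.1 :=
    hF.comp (Primrec.fst.comp Primrec.fst)
  have hlt : Primrec fun x : (ℕ × ℕ) × ℕ => decide (2 * Nat.pair x.1.2 x.2 + 1 < F cc x.1.1) :=
    (Primrec.nat_lt.comp hpair hFs).decide
  have hinner : Primrec₂ fun (x : (ℕ × ℕ) × ℕ) (t : ℕ) =>
      decide (F cc t ≠ 2 * Nat.pair x.1.2 x.2 + 1) := by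
    have : Primrec fun y : ((ℕ × ℕ) × ℕ) × ℕ =>
        !decide (F cc y.2 = 2 * Nat.pair y.1.1.2 y.1.2 + 1) :=
      Primrec.not.comp (Primrec.eq.comp (hF.comp Primrec.snd) (hpair.comp Primrec.fst)).decide
    exact this.of_eq fun y => by simp [decide_not]
  have hall : Primrec fun x : (ℕ × ℕ) × ℕ =>
      (List.range (x.1.1 + 1)).all fun t => decide (F cc t ≠ 2 * Nat.pair x.1.2 x.2 + 1) :=
    primrec_all (Primrec.list_range.comp (Primrec.succ.comp (Primrec.fst.comp Primrec.fst)))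
      hinner
  exact primrec_any (Primrec.list_range.comp (hF.comp Primrec.fst))
    (Primrec.and.comp hlt hall)

theorem primrec_VL : Primrec (VL cc) :=
  Primrec.listFilterMap
    (primrec_filter (Primrec.list_range.comp (primrec_F (cc := cc))) (primrec_okB (cc := cc)))
    ((Primrec.decode₂.comp Primrec.snd).to₂)

end Canon

/-- **Canonical `Σ^0_2` approximations.**
Every `Σ^0_2` upward closed set of strings `U` has a computable sequence `(V_s)` of finite
sets of strings such that membership of `σ` in `U` is equivalent to membership of `σ` in
the upward closure of `V_s` for all sufficiently large `s`, and infinitely often the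
upward closure of `V_s` is contained in `U`. -/
theorem canonical_sigma2_approximation (U : Set (List Bool)) (hU : SigmaStr 2 U)
    (hup : UpClosed U) :
    ∃ V : ℕ → List (List Bool), Computable V ∧
      (∀ σ, σ ∈ U ↔ ∃ s₀, ∀ s, s₀ < s → σ ∈ upClosure (V s)) ∧
      {s | upClosure (V s) ⊆ U}.Infinite := by
  classical
  obtain ⟨c, hc⟩ := hU
  have hc' : strCodes U = SigmaNumIdx 1 c := hc
  set cc := Canon.toC c with hcc
  have hmem : ∀ σ : List Bool, σ ∈ U ↔
      ∃ k, ¬(cc.eval (Nat.pair (Encodable.encode σ) k)).Dom := by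
    intro σ
    have h1 : σ ∈ U ↔ Encodable.encode σ ∈ strCodes U := by
      constructor
      · intro h; exact ⟨σ, h, rfl⟩
      · rintro ⟨τ, hτ, he⟩
        rwa [Encodable.encode_injective he] at hτ
    have h2 : (Encodable.encode σ ∈ SigmaNumIdx 1 c) =
        ∃ k, ¬((Canon.toC c).eval (Nat.pair (Encodable.encode σ) k)).Dom := by
      rw [Canon.eval_toC]
      rfl
    rw [h1, hc', h2]
  have key : ∀ s, s ∈ Canon.GoodS (cc := cc) → ∀ ρ, ρ ∈ Canon.VL cc s → ρ ∈ U := by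
    intro s hs ρ hρ
    rw [Canon.mem_VL] at hρ
    obtain ⟨-, hok⟩ := hρ
    rw [Canon.okB_iff] at hok
    obtain ⟨k, hlt, hne⟩ := hok
    rw [hmem ρ]
    refine ⟨k, fun hdom => ?_⟩
    obtain ⟨t, ht⟩ := Canon.F_eq_odd_iff.mpr hdom
    rcases le_or_gt t s with h | h
    · exact hne t h ht
    · have := hs t h
      omega
  refine ⟨Canon.VL cc, (Canon.primrec_VL (cc := cc)).to_comp, ?_, ?_⟩
  · intro σ
    constructor
    · intro hσ
      obtain ⟨k, hk⟩ := (hmem σ).mp hσ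
      have hFa : ∀ s, Canon.F cc s ≠ 2 * Nat.pair (Encodable.encode σ) k + 1 := by
        intro s hEq
        exact hk (Canon.F_eq_odd_iff.mp ⟨s, hEq⟩)
      have hfin : {s | Canon.F cc s ≤ 2 * Nat.pair (Encodable.encode σ) k + 1}.Finite := by
        have he : {s | Canon.F cc s ≤ 2 * Nat.pair (Encodable.encode σ) k + 1} =
            Canon.F cc ⁻¹' Set.Iic (2 * Nat.pair (Encodable.encode σ) k + 1) := rfl
        rw [he]
        exact Set.Finite.preimage (Function.Injective.injOn Canon.F_inj) (Set.finite_Iic _)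
      obtain ⟨s₀, hs₀⟩ := hfin.bddAbove
      refine ⟨s₀, fun s hs => ?_⟩
      have hFs : 2 * Nat.pair (Encodable.encode σ) k + 1 < Canon.F cc s := by
        by_contra h'
        push_neg at h'
        have : s ≤ s₀ := hs₀ h'
        omega
      refine ⟨σ, ?_, List.prefix_refl σ⟩
      rw [Canon.mem_VL]
      refine ⟨?_, ?_⟩
      · have := Nat.left_le_pair (Encodable.encode σ) k
        omega
      · rw [Canon.okB_iff]
        exact ⟨k, hFs, fun t _ => hFa t⟩
    · rintro ⟨s₀, h⟩
      obtain ⟨s, hs₀s, hsD⟩ := Canon.good_unbounded cc s₀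
      obtain ⟨ρ, hρV, hρσ⟩ := h s hs₀s
      exact hup ρ (key s hsD ρ hρV) σ hρσ
  · refine (Canon.good_infinite cc).mono ?_
    intro s hs τ hτ
    obtain ⟨ρ, hρV, hpre⟩ := hτ
    exact hup ρ (key s hs ρ hρV) τ hpre

end RandProb
end

section
/- Given any Σ^0_2 set U of finite binary strings, there exists an oracle machine M such that for each X ∈ 2^ω the following are equivalent: (i) M(X) is total; (ii) M(X) has infinite domain; (iii) X has no prefix in U. -/
open scoped Classical
open MeasureTheory

namespace RandProb

namespace Sigma2Aux

/-- Replace the oracle instruction by `zero`. -/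
def deO : CodeO → CodeO
  | .zero => .zero
  | .succ => .succ
  | .left => .left
  | .right => .right
  | .oracle => .zero
  | .pair a b => .pair (deO a) (deO b)
  | .comp a b => .comp (deO a) (deO b)
  | .prec a b => .prec (deO a) (deO b)
  | .rfind' a => .rfind' (deO a)

lemma deO_eval (O : ℕ → ℕ) : ∀ c : CodeO, (deO c).eval O = c.eval (fun _ => 0) := by
  intro c
  induction c with
  | zero => rfl
  | succ => rfl
  | left => rfl
  | right => rfl
  | oracle => rfl
  | pair cf cg ihf ihg => simp [deO, CodeO.eval, ihf, ihg] <;> rfl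
  | comp cf cg ihf ihg => simp [deO, CodeO.eval, ihf, ihg] <;> rfl
  | prec cf cg ihf ihg => simp [deO, CodeO.eval, ihf, ihg] <;> rfl
  | rfind' cf ihf => simp [deO, CodeO.eval, ihf] <;> rfl

/-- Translate ordinary partial recursive codes into oracle codes. -/
def conv : Nat.Partrec.Code → CodeO
  | .zero => .zero
  | .succ => .succ
  | .left => .left
  | .right => .right
  | .pair a b => .pair (conv a) (conv b)
  | .comp a b => .comp (conv a) (conv b)
  | .prec a b => .prec (conv a) (conv b)
  | .rfind' a => .rfind' (conv a)

lemma conv_eval (O : ℕ → ℕ) : ∀ c : Nat.Partrec.Code, (conv c).eval O = c.eval := by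
  intro c
  induction c with
  | zero => rfl
  | succ => rfl
  | left => rfl
  | right => rfl
  | pair cf cg ihf ihg => simp [conv, CodeO.eval, Nat.Partrec.Code.eval, ihf, ihg] <;> rfl
  | comp cf cg ihf ihg => simp [conv, CodeO.eval, Nat.Partrec.Code.eval, ihf, ihg] <;> rfl
  | prec cf cg ihf ihg => simp [conv, CodeO.eval, Nat.Partrec.Code.eval, ihf, ihg] <;> rfl
  | rfind' cf ihf => simp [conv, CodeO.eval, Nat.Partrec.Code.eval, ihf] <;> rfl

lemma exists_codeO {f : ℕ → ℕ} (hf : Computable f) :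
    ∃ c : CodeO, ∀ (O : ℕ → ℕ) (n : ℕ), c.eval O n = Part.some (f n) := by
  have h1 : Nat.Partrec (fun n => Part.some (f n)) := Partrec.nat_iff.mp hf
  obtain ⟨c, hc⟩ := Nat.Partrec.Code.exists_code.mp h1
  exact ⟨conv c, fun O n => by rw [conv_eval O c, hc]⟩

/-- The identity code. -/
def cid : CodeO := .pair .left .right

lemma cid_eval (O : ℕ → ℕ) (n : ℕ) : cid.eval O n = Part.some n := by
  simp [cid, CodeO.eval, Seq.seq]

/-- The "append one decoded bit to a decoded string, and encode" function. -/
def fapp : ℕ → ℕ := fun p =>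
  Encodable.encode
    (((Encodable.decode p.unpair.1 : Option (List Bool)).getD []) ++
      [((Encodable.decode p.unpair.2 : Option Bool).getD false)])

lemma fapp_computable : Computable fapp := by
  have hu1 : Computable fun p : ℕ => p.unpair.1 :=
    Computable.fst.comp Computable.unpair
  have hu2 : Computable fun p : ℕ => p.unpair.2 :=
    Computable.snd.comp Computable.unpair
  have h1 : Computable fun p : ℕ =>
      (Encodable.decode p.unpair.1 : Option (List Bool)).getD [] :=
    Computable.option_getD (Computable.decode.comp hu1) (Computable.const [])
  have h2 : Computable fun p : ℕ =>
      (Encodable.decode p.unpair.2 : Option Bool).getD false :=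
    Computable.option_getD (Computable.decode.comp hu2) (Computable.const false)
  have h3 : Computable fun p : ℕ =>
      [((Encodable.decode p.unpair.2 : Option Bool).getD false)] :=
    (Primrec.list_cons.to_comp).comp h2 (Computable.const [])
  exact Computable.encode.comp ((Primrec.list_append.to_comp).comp h1 h3)

lemma fapp_spec (l : List Bool) (b : Bool) :
    fapp (Nat.pair (Encodable.encode l) (Encodable.encode b)) = Encodable.encode (l ++ [b]) := by
  simp [fapp]

end Sigma2Aux


namespace Sigma2Aux

lemma bind_some {α β : Type u} (a : α) (f : α → Part β) : (Part.some a >>= f) = f a :=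
  Part.bind_some a f

lemma bind_def {α β : Type u} (x : Part α) (f : α → Part β) : x >>= f = x.bind f := rfl

lemma bind_someP {α β : Type} (a : α) (f : α →. β) : (Part.some a >>= f) = f a :=
  Part.bind_some a f

lemma pure0 (m : ℕ) : (pure 0 : ℕ →. ℕ) m = Part.some 0 := rfl

lemma comp_eval (cf cg : CodeO) (O : ℕ → ℕ) (n : ℕ) :
    (CodeO.comp cf cg).eval O n = cg.eval O n >>= cf.eval O := rfl

lemma pair_eval (cf cg : CodeO) (O : ℕ → ℕ) (n : ℕ) :
    (CodeO.pair cf cg).eval O n = Nat.pair <$> cf.eval O n <*> cg.eval O n := rfl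

lemma zero_eval (O : ℕ → ℕ) (n : ℕ) : CodeO.zero.eval O n = Part.some 0 := rfl
lemma succ_eval (O : ℕ → ℕ) (n : ℕ) : CodeO.succ.eval O n = Part.some (n + 1) := rfl
lemma left_eval (O : ℕ → ℕ) (n : ℕ) : CodeO.left.eval O n = Part.some n.unpair.1 := rfl
lemma right_eval (O : ℕ → ℕ) (n : ℕ) : CodeO.right.eval O n = Part.some n.unpair.2 := rfl
lemma oracle_eval (O : ℕ → ℕ) (n : ℕ) : CodeO.oracle.eval O n = Part.some (O n) := rfl

lemma prec_eval_zero (cf cg : CodeO) (O : ℕ → ℕ) (a : ℕ) :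
    (CodeO.prec cf cg).eval O (Nat.pair a 0) = cf.eval O a := by
  simp [CodeO.eval, Nat.unpaired, Nat.unpair_pair]

lemma prec_eval_succ (cf cg : CodeO) (O : ℕ → ℕ) (a n : ℕ) :
    (CodeO.prec cf cg).eval O (Nat.pair a (n + 1)) =
      (CodeO.prec cf cg).eval O (Nat.pair a n) >>= fun i =>
        cg.eval O (Nat.pair a (Nat.pair n i)) := by
  simp [CodeO.eval, Nat.unpaired, Nat.unpair_pair]

lemma oX_encode (X : Cantor) (n : ℕ) : oX X n = Encodable.encode (X n) := by
  unfold oX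
  cases X n <;> rfl

lemma initSeg_succ (X : Cantor) (m : ℕ) :
    initSeg X (m + 1) = initSeg X m ++ [X m] := by
  simp [initSeg, List.range_succ]

section

variable (c cf : CodeO)

/-- Code computing `Nat.pair a m ↦ encode (initSeg X m)` with oracle `oX X`. -/
def cEpre : CodeO :=
  .prec .zero (.comp cf (.pair (.comp .right .right) (.comp .oracle (.comp .left .right))))

/-- Code computing `m ↦ encode (initSeg X m)`. -/
def cE : CodeO := .comp (cEpre cf) (.pair .zero cid)

/-- Code computing `j ↦ eval0 c (Nat.pair (encode (initSeg X j.unpair.1)) j.unpair.2)`. -/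
def cG : CodeO := .comp (deO c) (.pair (.comp (cE cf) .left) .right)

def cstep2 : CodeO := .comp (cG c cf) (.comp .succ (.comp .left .right))

/-- The desired oracle machine. -/
def cM : CodeO := .comp (.prec (cG c cf) (cstep2 c cf)) (.pair .zero cid)

variable {cf}

lemma cEpre_eval (hcf : ∀ (O : ℕ → ℕ) (n : ℕ), cf.eval O n = Part.some (fapp n))
    (X : Cantor) (m : ℕ) :
    (cEpre cf).eval (oX X) (Nat.pair 0 m) = Part.some (Encodable.encode (initSeg X m)) := by
  induction m with
  | zero =>
      rw [cEpre, prec_eval_zero]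
      rfl
  | succ m ih =>
      rw [cEpre, prec_eval_succ, ← cEpre, ih, bind_some]
      have hstep :
          (CodeO.comp cf (.pair (.comp .right .right) (.comp .oracle (.comp .left .right)))).eval
              (oX X) (Nat.pair 0 (Nat.pair m (Encodable.encode (initSeg X m)))) =
            Part.some (fapp (Nat.pair (Encodable.encode (initSeg X m)) (oX X m))) := by
        simp [comp_eval, pair_eval, left_eval, right_eval, oracle_eval, Seq.seq,
          Part.bind_some, Nat.unpair_pair, hcf, bind_someP]
      rw [hstep, oX_encode, fapp_spec, initSeg_succ]

lemma cE_eval (hcf : ∀ (O : ℕ → ℕ) (n : ℕ), cf.eval O n = Part.some (fapp n))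
    (X : Cantor) (m : ℕ) :
    (cE cf).eval (oX X) m = Part.some (Encodable.encode (initSeg X m)) := by
  have h1 : (CodeO.pair .zero cid).eval (oX X) m = Part.some (Nat.pair 0 m) := by
    rw [pair_eval, zero_eval, cid_eval]
    simp [Seq.seq]
  rw [cE]
  show ((CodeO.pair .zero cid).eval (oX X) m) >>= (cEpre cf).eval (oX X) = _
  erw [h1, bind_some, cEpre_eval hcf]

lemma cG_eval (hcf : ∀ (O : ℕ → ℕ) (n : ℕ), cf.eval O n = Part.some (fapp n))
    (X : Cantor) (j : ℕ) :
    (cG c cf).eval (oX X) j =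
      eval0 c (Nat.pair (Encodable.encode (initSeg X j.unpair.1)) j.unpair.2) := by
  have h2 : (CodeO.comp (cE cf) .left).eval (oX X) j =
      Part.some (Encodable.encode (initSeg X j.unpair.1)) := by
    show (CodeO.left.eval (oX X) j) >>= (cE cf).eval (oX X) = _
    erw [left_eval, bind_some, cE_eval hcf]
  have h1 : (CodeO.pair (.comp (cE cf) .left) .right).eval (oX X) j =
      Part.some (Nat.pair (Encodable.encode (initSeg X j.unpair.1)) j.unpair.2) := by
    rw [pair_eval, h2, right_eval]
    simp [Seq.seq]
  rw [cG]
  show ((CodeO.pair (.comp (cE cf) .left) .right).eval (oX X) j) >>= (deO c).eval (oX X) = _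
  erw [h1, bind_some, deO_eval]
  rfl

lemma cstep2_eval (hcf : ∀ (O : ℕ → ℕ) (n : ℕ), cf.eval O n = Part.some (fapp n))
    (X : Cantor) (y i : ℕ) :
    (cstep2 c cf).eval (oX X) (Nat.pair 0 (Nat.pair y i)) =
      eval0 c (Nat.pair (Encodable.encode (initSeg X (y+1).unpair.1)) (y+1).unpair.2) := by
  rw [cstep2]
  show ((CodeO.comp .succ (.comp .left .right)).eval (oX X) (Nat.pair 0 (Nat.pair y i)))
      >>= (cG c cf).eval (oX X) = _
  have h1 : (CodeO.comp .succ (.comp .left .right)).eval (oX X) (Nat.pair 0 (Nat.pair y i)) =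
      Part.some (y + 1) := by
    erw [comp_eval, comp_eval, right_eval, bind_some, left_eval, bind_some, succ_eval,
      Nat.unpair_pair, Nat.unpair_pair]
  erw [h1, bind_some, cG_eval c hcf]

/-- The auxiliary abbreviation for the `j`-th test. -/
def Q (X : Cantor) (j : ℕ) : Part ℕ :=
  eval0 c (Nat.pair (Encodable.encode (initSeg X j.unpair.1)) j.unpair.2)

lemma precG_dom (hcf : ∀ (O : ℕ → ℕ) (n : ℕ), cf.eval O n = Part.some (fapp n))
    (X : Cantor) (n : ℕ) :
    ((CodeO.prec (cG c cf) (cstep2 c cf)).eval (oX X) (Nat.pair 0 n)).Dom ↔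
      ∀ j ≤ n, (Q c X j).Dom := by
  induction n with
  | zero =>
      rw [prec_eval_zero, cG_eval c hcf]
      constructor
      · intro h j hj
        rw [Nat.le_zero.mp hj]
        exact h
      · intro h
        exact h 0 le_rfl
  | succ n ih =>
      rw [prec_eval_succ, bind_def, Part.bind_dom]
      constructor
      · rintro ⟨h1, h2⟩
        rw [cstep2_eval c hcf] at h2
        intro j hj
        rcases Nat.le_succ_iff.mp hj with hj' | hj'
        · exact ih.mp h1 j hj'
        · rw [hj']
          exact h2
      · intro h
        refine ⟨ih.mpr fun j hj => h j (hj.trans (Nat.le_succ n)), ?_⟩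
        rw [cstep2_eval c hcf]
        exact h (n + 1) le_rfl

lemma cM_dom (hcf : ∀ (O : ℕ → ℕ) (n : ℕ), cf.eval O n = Part.some (fapp n))
    (X : Cantor) (n : ℕ) :
    (evalO X (cM c cf) n).Dom ↔ ∀ j ≤ n, (Q c X j).Dom := by
  have h1 : (CodeO.pair .zero cid).eval (oX X) n = Part.some (Nat.pair 0 n) := by
    rw [pair_eval, zero_eval, cid_eval]
    simp [Seq.seq]
  have h2 : evalO X (cM c cf) n =
      (CodeO.prec (cG c cf) (cstep2 c cf)).eval (oX X) (Nat.pair 0 n) := by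
    show ((CodeO.pair .zero cid).eval (oX X) n)
        >>= (CodeO.prec (cG c cf) (cstep2 c cf)).eval (oX X) = _
    erw [h1, bind_some]
  rw [h2]
  exact precG_dom c hcf X n

end

end Sigma2Aux


/-- **From a `Σ^0_2` set of strings to an oracle machine.**
Given a `Σ^0_2` set `U` of strings there is an oracle machine `M` such that, for every
`X ∈ 2^ω`: `M(X)` is total iff `M(X)` has infinite domain iff `X` has no prefix in `U`. -/
theorem sigma2_to_oracle_machine (U : Set (List Bool)) (hU : SigmaStr 2 U) :
    ∃ M : CodeO, ∀ X : Cantor,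
      (X ∈ TOT M ↔ X ∉ cyl U) ∧ (X ∈ INF M ↔ X ∉ cyl U) := by
  classical
  obtain ⟨c, hc⟩ := hU
  obtain ⟨cf, hcf⟩ := Sigma2Aux.exists_codeO Sigma2Aux.fapp_computable
  refine ⟨Sigma2Aux.cM c cf, fun X => ?_⟩
  -- Reformulate membership in `cyl U`.
  have hmem : ∀ m : ℕ, initSeg X m ∈ U ↔
      ∃ k, ¬ (eval0 c (Nat.pair (Encodable.encode (initSeg X m)) k)).Dom := by
    intro m
    have h1 : initSeg X m ∈ U ↔ Encodable.encode (initSeg X m) ∈ strCodes U := by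
      constructor
      · intro h
        exact ⟨initSeg X m, h, rfl⟩
      · rintro ⟨σ, hσ, hσe⟩
        rwa [← Encodable.encode_injective hσe]
    rw [h1, hc]
    simp [SigmaNumIdx]
  -- `X ∉ cyl U` iff all the tests converge.
  have hcyl : X ∉ cyl U ↔ ∀ j, (Sigma2Aux.Q c X j).Dom := by
    constructor
    · intro h j
      have h2 : initSeg X j.unpair.1 ∉ U := fun hj => h ⟨j.unpair.1, hj⟩
      rw [hmem] at h2
      push_neg at h2
      exact h2 j.unpair.2
    · rintro h ⟨m, hm⟩
      rw [hmem] at hm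
      obtain ⟨k, hk⟩ := hm
      exact hk (by simpa [Sigma2Aux.Q, Nat.unpair_pair] using h (Nat.pair m k))
  have hTOT : X ∈ TOT (Sigma2Aux.cM c cf) ↔ ∀ j, (Sigma2Aux.Q c X j).Dom := by
    constructor
    · intro h j
      exact (Sigma2Aux.cM_dom c hcf X j).mp (h j) j le_rfl
    · intro h n
      exact (Sigma2Aux.cM_dom c hcf X n).mpr fun j _ => h j
  have hINF : X ∈ INF (Sigma2Aux.cM c cf) ↔ ∀ j, (Sigma2Aux.Q c X j).Dom := by
    constructor
    · intro h j
      obtain ⟨n, hn, hjn⟩ := Set.Infinite.exists_gt h j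
      exact (Sigma2Aux.cM_dom c hcf X n).mp hn j hjn.le
    · intro h
      have : domSet (Sigma2Aux.cM c cf) X = Set.univ := by
        ext n
        simp only [Set.mem_univ, iff_true]
        exact (Sigma2Aux.cM_dom c hcf X n).mpr fun j _ => h j
      rw [INF, Set.mem_setOf_eq, this]
      exact Set.infinite_univ
  exact ⟨hTOT.trans hcyl.symm, hINF.trans hcyl.symm⟩


end RandProb
end

section
/- Given any Σ^0_2 set U of finite binary strings, there exists a monotone machine N such that for every X ∈ 2^ω, the output N(X) is infinite if and only if X has no prefix in U. -/
open scoped Classical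
open MeasureTheory

namespace RandProb

section Sigma2Mono

open Nat.Partrec (Code)
open Nat.Partrec.Code

theorem eval0_partrec (c : CodeO) : Nat.Partrec (eval0 c) := by
  induction c with
  | zero => exact Nat.Partrec.zero
  | succ => exact Nat.Partrec.succ
  | left => exact Nat.Partrec.left
  | right => exact Nat.Partrec.right
  | oracle => exact Nat.Partrec.of_primrec Nat.Primrec.zero
  | pair cf cg hf hg => exact hf.pair hg
  | comp cf cg hf hg => exact hf.comp hg
  | prec cf cg hf hg => exact hf.prec hg
  | rfind' cf hf => exact hf.rfind'

private def runB (p : ℕ → Bool) : ℕ → ℕ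
  | 0 => 0
  | n + 1 => if runB p n = n ∧ p n = true then n + 1 else runB p n

private theorem runB_le (p : ℕ → Bool) : ∀ n, runB p n ≤ n := by
  intro n; induction n with
  | zero => exact le_refl 0
  | succ n ih =>
      rw [runB]
      split
      · exact le_refl _
      · exact ih.trans (Nat.le_succ n)

private theorem runB_spec (p : ℕ → Bool) : ∀ n, ∀ i < runB p n, p i = true := by
  intro n; induction n with
  | zero => intro i h; simp [runB] at h
  | succ n ih =>
      intro i h
      rw [runB] at h
      split at h
      · rename_i hc
        rcases Nat.lt_succ_iff_lt_or_eq.1 h with h' | h'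
        · exact ih i (lt_of_lt_of_eq h' hc.1.symm)
        · exact h' ▸ hc.2
      · exact ih i h

private theorem runB_eq_or (p : ℕ → Bool) : ∀ n, runB p n = n ∨ p (runB p n) = false := by
  intro n; induction n with
  | zero => exact Or.inl rfl
  | succ n ih =>
      rw [runB]
      split
      · exact Or.inl rfl
      · rename_i hc
        rcases ih with h | h
        · right
          rw [h]
          by_contra hb
          exact hc ⟨h, eq_true_of_ne_false fun hf => hb (h ▸ hf)⟩
        · exact Or.inr h

private theorem runB_ge (p : ℕ → Bool) (t n : ℕ) (h : ∀ i < t, p i = true) (htn : t ≤ n) :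
    t ≤ runB p n := by
  by_contra hlt
  push_neg at hlt
  rcases runB_eq_or p n with he | he
  · omega
  · have := h _ hlt
    rw [this] at he; exact Bool.noConfusion he

private theorem runB_mono {p q : ℕ → Bool} {n m : ℕ} (hpq : ∀ i, p i = true → q i = true)
    (hnm : n ≤ m) : runB p n ≤ runB q m :=
  runB_ge q _ m (fun i hi => hpq i (runB_spec p n i hi)) ((runB_le p n).trans hnm)

private def prefB (τ : List Bool) (j : ℕ) : List Bool :=
  (List.range j).map fun i => τ.getD i false

private theorem prefB_of_prefix {σ τ : List Bool} (h : σ <+: τ) {j : ℕ} (hj : j ≤ σ.length) :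
    prefB σ j = prefB τ j := by
  obtain ⟨ρ, rfl⟩ := h
  unfold prefB
  refine List.map_congr_left fun i hi => ?_
  rw [List.mem_range] at hi
  rw [List.getD_append _ _ _ _ (lt_of_lt_of_le hi hj)]

private def Bfun (cc : Code) (τ : List Bool) (i : ℕ) : Bool :=
  if (Nat.unpair i).1 ≤ τ.length then
    (evaln τ.length cc
      (Nat.pair (Encodable.encode (prefB τ (Nat.unpair i).1)) (Nat.unpair i).2)).isSome
  else false

private theorem Bfun_mono (cc : Code) {σ τ : List Bool} (h : σ <+: τ) (i : ℕ)
    (hb : Bfun cc σ i = true) : Bfun cc τ i = true := by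
  unfold Bfun at *
  split at hb
  · rename_i hle
    rw [if_pos (hle.trans h.length_le)]
    rw [← prefB_of_prefix h hle]
    rw [Option.isSome_iff_exists] at hb ⊢
    obtain ⟨x, hx⟩ := hb
    exact ⟨x, evaln_mono h.length_le hx⟩
  · exact absurd hb (by simp)

private def gFun (cc : Code) (τ : List Bool) : ℕ := runB (Bfun cc τ) τ.length

private theorem gFun_mono (cc : Code) {σ τ : List Bool} (h : σ <+: τ) :
    gFun cc σ ≤ gFun cc τ :=
  runB_mono (fun i => Bfun_mono cc h i) h.length_le

private def outFun (cc : Code) (τ : List Bool) : List Bool := List.replicate (gFun cc τ) true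

private theorem outFun_length (cc : Code) (τ : List Bool) :
    (outFun cc τ).length = gFun cc τ := by
  simp [outFun]

private theorem outFun_prefix (cc : Code) {σ τ : List Bool} (h : σ <+: τ) :
    outFun cc σ <+: outFun cc τ := by
  refine ⟨List.replicate (gFun cc τ - gFun cc σ) true, ?_⟩
  rw [outFun, outFun, ← List.replicate_add, Nat.add_sub_cancel' (gFun_mono cc h)]

private theorem outFun_computable (cc : Code) : Computable (outFun cc) := by
  have hpref : Primrec₂ prefB := by
    unfold prefB
    exact Primrec.list_map (Primrec.list_range.comp Primrec.snd)
      ((Primrec.list_getD false).comp₂ (Primrec.fst.comp₂ Primrec₂.left) Primrec₂.right)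
  have hlen : Primrec (fun p : List Bool × ℕ => p.1.length) :=
    Primrec.list_length.comp Primrec.fst
  have hu1 : Primrec (fun p : List Bool × ℕ => (Nat.unpair p.2).1) :=
    Primrec.fst.comp (Primrec.unpair.comp Primrec.snd)
  have hu2 : Primrec (fun p : List Bool × ℕ => (Nat.unpair p.2).2) :=
    Primrec.snd.comp (Primrec.unpair.comp Primrec.snd)
  have harg : Primrec (fun p : List Bool × ℕ =>
      ((p.1.length, cc),
        Nat.pair (Encodable.encode (prefB p.1 (Nat.unpair p.2).1)) (Nat.unpair p.2).2)) :=
    (hlen.pair (Primrec.const cc)).pair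
      (Primrec₂.natPair.comp (Primrec.encode.comp (hpref.comp Primrec.fst hu1)) hu2)
  have hB : Primrec₂ (Bfun cc) := by
    unfold Bfun
    refine Primrec.ite ?_
      (Primrec.option_isSome.comp (primrec_evaln.comp harg)).to₂ (Primrec.const false).to₂
    exact (Primrec.nat_le.comp (Primrec.fst.comp (Primrec.unpair.comp Primrec.snd))
      (Primrec.list_length.comp Primrec.fst))
  have hg : Primrec (gFun cc) := by
    have hrec : Primrec (fun τ : List Bool =>
        Nat.rec (motive := fun _ => ℕ) 0
          (fun i r => if r = i ∧ Bfun cc τ i = true then i + 1 else r) τ.length) := by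
      refine Primrec.nat_rec' Primrec.list_length (Primrec.const 0)
        (h := fun τ q => if q.2 = q.1 ∧ Bfun cc τ q.1 = true then q.1 + 1 else q.2) ?_
      refine Primrec.ite ?_ (Primrec.succ.comp (Primrec.fst.comp Primrec.snd)).to₂
        (Primrec.snd.comp Primrec.snd).to₂
      refine PrimrecPred.and ?_ ?_
      · exact Primrec.eq.comp (Primrec.snd.comp Primrec.snd) (Primrec.fst.comp Primrec.snd)
      · exact Primrec.eq.comp (hB.comp Primrec.fst (Primrec.fst.comp Primrec.snd))
          (Primrec.const true)
    refine hrec.of_eq fun τ => ?_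
    show _ = runB (Bfun cc τ) τ.length
    induction τ.length with
    | zero => rfl
    | succ n ih => rw [runB, ← ih]
  have : Primrec (outFun cc) := by
    unfold outFun
    exact (Primrec.list_map (Primrec.list_range.comp hg) (Primrec.const true).to₂).of_eq
      fun τ => by simp
  exact this.to_comp

private theorem initSeg_length (X : Cantor) (n : ℕ) : (initSeg X n).length = n := by
  simp [initSeg]

private theorem initSeg_prefix (X : Cantor) {m n : ℕ} (h : m ≤ n) :
    initSeg X m <+: initSeg X n := by
  have : initSeg X m = (initSeg X n).take m := by
    unfold initSeg
    rw [← List.map_take, List.take_range, min_eq_left h]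
  rw [this]
  exact List.take_prefix _ _

private theorem prefB_initSeg (X : Cantor) {j n : ℕ} (hj : j ≤ n) :
    prefB (initSeg X n) j = initSeg X j := by
  have h1 : prefB (initSeg X j) j = prefB (initSeg X n) j :=
    prefB_of_prefix (initSeg_prefix X hj) (by rw [initSeg_length])
  rw [← h1]
  unfold prefB initSeg
  refine List.map_congr_left fun i hi => ?_
  rw [List.mem_range] at hi
  rw [List.getD_eq_getElem?_getD]
  simp [List.getElem?_range hi, hi]

end Sigma2Mono

end RandProb


namespace RandProb

open Nat.Partrec (Code)
open Nat.Partrec.Code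


/-- **From a `Σ^0_2` set of strings to a monotone machine.**
Given a `Σ^0_2` set `U` of strings there is a monotone machine `N` such that for every
`X ∈ 2^ω` the output `N(X)` is infinite iff `X` has no prefix in `U`. -/
theorem sigma2_to_monotone_machine (U : Set (List Bool)) (hU : SigmaStr 2 U) :
    ∃ N : MonoMachine, ∀ X : Cantor, X ∈ MonoINF N ↔ X ∉ cyl U := by
  obtain ⟨c0, hc0⟩ := hU
  obtain ⟨cc, hcc⟩ := exists_code.1 (eval0_partrec c0)
  -- membership characterization of `U`
  have hmem : ∀ σ : List Bool,
      σ ∈ U ↔ ∃ k, ¬ (eval0 c0 (Nat.pair (Encodable.encode σ) k)).Dom := by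
    intro σ
    have h1 : σ ∈ U ↔ Encodable.encode σ ∈ strCodes U := by
      constructor
      · intro h; exact ⟨σ, h, rfl⟩
      · rintro ⟨σ', hσ', he⟩
        rwa [Encodable.encode_injective he] at hσ'
    rw [h1, hc0]
    exact Iff.rfl
  -- domains vs step counting
  have hdom : ∀ m : ℕ, (eval0 c0 m).Dom ↔ ∃ s, (evaln s cc m).isSome = true := by
    intro m
    rw [Part.dom_iff_mem]
    constructor
    · rintro ⟨x, hx⟩
      rw [← hcc] at hx
      obtain ⟨s, hs⟩ := evaln_complete.1 hx
      exact ⟨s, by rw [Option.isSome_iff_exists]; exact ⟨x, hs⟩⟩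
    · rintro ⟨s, hs⟩
      rw [Option.isSome_iff_exists] at hs
      obtain ⟨x, hx⟩ := hs
      exact ⟨x, by rw [← hcc]; exact evaln_complete.2 ⟨s, hx⟩⟩
  -- the machine
  refine ⟨⟨(outFun cc : List Bool →. List Bool), outFun_computable cc, ?_⟩, ?_⟩
  · intro σ τ a b hpre ha hb
    rw [PFun.coe_val, Part.mem_some_iff] at ha hb
    rw [ha, hb]
    exact outFun_prefix cc hpre
  intro X
  constructor
  · -- X ∈ MonoINF N → X ∉ cyl U
    intro hinf hcyl
    obtain ⟨n0, hn0⟩ := hcyl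
    obtain ⟨k0, hk0⟩ := (hmem _).1 hn0
    set i0 := Nat.pair n0 k0 with hi0
    have hBfalse : ∀ n, Bfun cc (initSeg X n) i0 = false := by
      intro n
      unfold Bfun
      rw [hi0, Nat.unpair_pair]
      by_cases hle : n0 ≤ (initSeg X n).length
      · rw [if_pos hle]
        rw [initSeg_length] at hle
        rw [prefB_initSeg X hle, initSeg_length]
        by_contra hb
        have hb' : (evaln n cc (Nat.pair (Encodable.encode (initSeg X n0)) k0)).isSome
            = true := by
          revert hb
          cases (evaln n cc (Nat.pair (Encodable.encode (initSeg X n0)) k0)).isSome <;> simp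
        exact hk0 ((hdom _).2 ⟨n, hb'⟩)
      · rw [if_neg hle]
    have hbound : ∀ n, gFun cc (initSeg X n) ≤ i0 := by
      intro n
      by_contra h
      push_neg at h
      have := runB_spec (Bfun cc (initSeg X n)) (initSeg X n).length i0 h
      rw [hBfalse n] at this
      exact Bool.noConfusion this
    obtain ⟨n, a, ha, hk⟩ := hinf (i0 + 1)
    have ha' : a = outFun cc (initSeg X n) := Part.mem_some_iff.1 ha
    rw [ha', outFun_length] at hk
    exact absurd (hk.trans (hbound n)) (by omega)
  · -- X ∉ cyl U → X ∈ MonoINF N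
    intro hcyl k
    have hDom : ∀ n k', (eval0 c0 (Nat.pair (Encodable.encode (initSeg X n)) k')).Dom := by
      intro n k'
      by_contra h
      exact hcyl ⟨n, (hmem _).2 ⟨k', h⟩⟩
    have hS : ∀ i : ℕ, ∃ s,
        (evaln s cc (Nat.pair (Encodable.encode (initSeg X (Nat.unpair i).1))
          (Nat.unpair i).2)).isSome = true :=
      fun i => (hdom _).1 (hDom _ _)
    choose s hs using hS
    set n := max k ((Finset.range k).sup fun i => max (Nat.unpair i).1 (s i)) with hn
    have hkn : k ≤ n := le_max_left _ _
    have hBtrue : ∀ i < k, Bfun cc (initSeg X n) i = true := by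
      intro i hi
      have hsup : max (Nat.unpair i).1 (s i) ≤ n :=
        le_trans (Finset.le_sup (f := fun i => max (Nat.unpair i).1 (s i)) (Finset.mem_range.2 hi)) (le_max_right _ _)
      have hj : (Nat.unpair i).1 ≤ n := le_trans (le_max_left _ _) hsup
      have hsn : s i ≤ n := le_trans (le_max_right _ _) hsup
      unfold Bfun
      rw [initSeg_length, if_pos hj, prefB_initSeg X hj]
      obtain ⟨x, hx⟩ := Option.isSome_iff_exists.1 (hs i)
      exact Option.isSome_iff_exists.2 ⟨x, evaln_mono hsn hx⟩
    refine ⟨n, outFun cc (initSeg X n), ?_, ?_⟩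
    · exact Part.mem_some_iff.2 rfl
    · rw [outFun_length]
      refine runB_ge _ k _ hBtrue ?_
      rw [initSeg_length]
      exact hkn

end RandProb
end
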